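/- The distribution η_α (with η_α(0) = 1/α, η_α(1) = 0, η_α(k) = w_k/k! for k ≥ 2) is critical: its mean ∑_{k≥0} k·η_α(k) equals 1. -/

import Mathlib

noncomputable def marchalW (α : ℝ) : ℕ → ℝ
  | 0 => 1
  | 1 => 0
  | k => (α - 1) * ∏ j ∈ Finset.Ico 2 k, ((j : ℝ) - α)

noncomputable def eta (α : ℝ) (k : ℕ) : ℝ :=
  if k = 0 then 1 / α
  else if k = 1 then 0
  else marchalW α k / (Nat.factorial k : ℝ)

open Finset Filter Real Topology

lemma marchalW_add_two (α : ℝ) (n : ℕ) :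
    marchalW α (n + 2) = (α - 1) * ∏ j ∈ Finset.Ico 2 (n + 2), ((j : ℝ) - α) := rfl

lemma eta_add_two (α : ℝ) (n : ℕ) :
    eta α (n + 2) = marchalW α (n + 2) / ((n + 2).factorial : ℝ) := by
  simp [eta]

lemma prod_eq_aux (α : ℝ) (n : ℕ) :
    ∏ i ∈ range n, (1 - (α - 1) / ((i : ℝ) + 1))
      = (∏ j ∈ Finset.Ico 2 (n + 2), ((j : ℝ) - α)) / (n.factorial : ℝ) := by
  induction n with
  | zero => simp
  | succ n ih =>
    rw [prod_range_succ, ih, show n + 1 + 2 = (n + 2) + 1 from rfl,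
      Finset.prod_Ico_succ_top (a := 2) (b := n + 2) (by omega), Nat.factorial_succ]
    have h1 : (n.factorial : ℝ) ≠ 0 := Nat.cast_ne_zero.mpr n.factorial_ne_zero
    have h2 : ((n : ℝ) + 1) ≠ 0 := by positivity
    push_cast
    field_simp
    ring

lemma sum_eq_aux (α : ℝ) (n : ℕ) :
    ∑ k ∈ range (n + 3), (k : ℝ) * eta α k
      = 1 - ∏ i ∈ range (n + 1), (1 - (α - 1) / ((i : ℝ) + 1)) := by
  induction n with
  | zero =>
    rw [show (0:ℕ) + 3 = 2 + 1 from rfl, sum_range_succ, sum_range_succ, sum_range_one]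
    norm_num [eta, marchalW, Nat.factorial]
    ring
  | succ n ih =>
    have h1 : ((n + 1).factorial : ℝ) ≠ 0 := Nat.cast_ne_zero.mpr (n + 1).factorial_ne_zero
    have hq : (∏ j ∈ Finset.Ico 2 ((n + 1) + 2), ((j : ℝ) - α))
        = (∏ i ∈ range (n + 1), (1 - (α - 1) / ((i : ℝ) + 1))) * ((n + 1).factorial : ℝ) := by
      rw [prod_eq_aux α (n + 1), div_mul_cancel₀ _ h1]
    rw [show n + 1 + 3 = ((n + 1) + 2) + 1 from rfl, sum_range_succ, ih,
      show (n + 1 : ℕ) + 2 = n + 3 from rfl, eta_add_two, marchalW_add_two,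
      show (n + 3 : ℕ) = (n + 1) + 2 from rfl, hq]
    conv_rhs => rw [prod_range_succ]
    have hfac : (((n + 1) + 2).factorial : ℝ)
        = ((n : ℝ) + 3) * (((n : ℝ) + 2) * ((n + 1).factorial : ℝ)) := by
      rw [Nat.factorial_succ, Nat.factorial_succ]
      push_cast
      ring
    rw [hfac]
    generalize ∏ i ∈ range (n + 1), (1 - (α - 1) / ((i : ℝ) + 1)) = P
    have h2 : ((n : ℝ) + 1 + 1) ≠ 0 := by positivity
    have h3 : ((n : ℝ) + 3) ≠ 0 := by positivity
    have h4 : ((n : ℝ) + 2) ≠ 0 := by positivity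
    push_cast
    field_simp [h1]
    ring

lemma prod_tendsto_zero (α : ℝ) (hα₁ : 1 < α) (hα₂ : α < 2) :
    Tendsto (fun n => ∏ i ∈ range n, (1 - (α - 1) / ((i : ℝ) + 1))) atTop (𝓝 0) := by
  have hβ : 0 < α - 1 := by linarith
  have hβ1 : α - 1 < 1 := by linarith
  have hfac_nonneg : ∀ i : ℕ, 0 ≤ 1 - (α - 1) / ((i : ℝ) + 1) := by
    intro i
    have hi : (0 : ℝ) ≤ (i : ℝ) := Nat.cast_nonneg i
    have : (α - 1) / ((i : ℝ) + 1) ≤ 1 := by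
      rw [div_le_one (by positivity)]
      linarith
    linarith
  have hupper : ∀ n : ℕ, ∏ i ∈ range n, (1 - (α - 1) / ((i : ℝ) + 1))
      ≤ Real.exp (-(α - 1) * ∑ i ∈ range n, 1 / ((i : ℝ) + 1)) := by
    intro n
    have : ∀ i ∈ range n, 1 - (α - 1) / ((i : ℝ) + 1)
        ≤ Real.exp (-(α - 1) * (1 / ((i : ℝ) + 1))) := by
      intro i _
      have := Real.add_one_le_exp (-(α - 1) * (1 / ((i : ℝ) + 1)))
      have he : -(α - 1) * (1 / ((i : ℝ) + 1)) + 1 = 1 - (α - 1) / ((i : ℝ) + 1) := by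
        ring
      linarith [he ▸ this]
    calc ∏ i ∈ range n, (1 - (α - 1) / ((i : ℝ) + 1))
        ≤ ∏ i ∈ range n, Real.exp (-(α - 1) * (1 / ((i : ℝ) + 1))) :=
          Finset.prod_le_prod (fun i _ => hfac_nonneg i) this
      _ = Real.exp (-(α - 1) * ∑ i ∈ range n, 1 / ((i : ℝ) + 1)) := by
          rw [← Real.exp_sum, Finset.mul_sum]
  have hlower : ∀ n : ℕ, 0 ≤ ∏ i ∈ range n, (1 - (α - 1) / ((i : ℝ) + 1)) :=
    fun n => Finset.prod_nonneg (fun i _ => hfac_nonneg i)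
  have hexp : Tendsto (fun n => Real.exp (-(α - 1) * ∑ i ∈ range n, 1 / ((i : ℝ) + 1)))
      atTop (𝓝 0) := by
    apply Real.tendsto_exp_atBot.comp
    have hsum := Real.tendsto_sum_range_one_div_nat_succ_atTop
    exact Filter.Tendsto.const_mul_atTop_of_neg (by linarith) hsum
  exact tendsto_of_tendsto_of_tendsto_of_le_of_le tendsto_const_nhds hexp hlower hupper

/-- The offspring distribution `η_α` is critical: its mean equals `1`. -/
theorem eta_critical (α : ℝ) (hα₁ : 1 < α) (hα₂ : α < 2) :
    ∑' k : ℕ, (k : ℝ) * eta α k = 1 := by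
  have hnonneg : ∀ k : ℕ, 0 ≤ (k : ℝ) * eta α k := by
    intro k
    match k with
    | 0 => simp
    | 1 => simp [eta]
    | (n + 2) =>
      rw [eta_add_two, marchalW_add_two]
      apply mul_nonneg (by positivity)
      apply div_nonneg _ (by positivity)
      apply mul_nonneg (by linarith)
      apply Finset.prod_nonneg
      intro j hj
      simp only [Finset.mem_Ico] at hj
      have : (2 : ℝ) ≤ (j : ℝ) := by exact_mod_cast hj.1
      linarith
  have htend : Tendsto (fun n => ∑ k ∈ range n, (k : ℝ) * eta α k) atTop (𝓝 1) := by
    rw [← tendsto_add_atTop_iff_nat 3]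
    simp only [sum_eq_aux α]
    have := ((prod_tendsto_zero α hα₁ hα₂).comp (tendsto_add_atTop_nat 1)).const_sub 1
    simpa using this
  exact ((hasSum_iff_tendsto_nat_of_nonneg hnonneg 1).mpr htend).tsum_eq
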